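/- Let p be an odd prime, let F be the field with p² elements containing ℤ/pℤ, and let v ∈ F satisfy v^{p+1} = 1 and v^p ≠ v (so v ∉ ℤ/pℤ). Set x = v + v^p ∈ ℤ/pℤ and assume x ≠ 0; then x² ≠ 4, and set κ = x²/(x²−4) ∈ ℤ/pℤ. Then the map t ↦ (t + κ/t, tv + κ/(tv)) is an injection of E = {t ∈ F : t^{p+1} = κ} into (ℤ/pℤ)² whose image is exactly C(x) = {(y,z) ∈ (ℤ/pℤ)² : x² + y² + z² = xyz}; in particular |C(x)| = p + 1. Moreover the rotation (y,z) ↦ (z, xz − y) maps C(x) to itself and corresponds under this parametrization to t ↦ tv. -/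

import Mathlib

open Polynomial in
lemma aux_fix (p : ℕ) [hp : Fact p.Prime] (F : Type) [Field F] [Algebra (ZMod p) F]
    [Fintype F] (a : F) (h : a ^ p = a) : ∃ c : ZMod p, algebraMap (ZMod p) F c = a := by
  classical
  set i := algebraMap (ZMod p) F with hidef
  have hi : Function.Injective i := i.injective
  set P : Polynomial F := X ^ p - X with hP
  have hp2 : 2 ≤ p := hp.out.two_le
  have hc : P.coeff p = 1 := by
    simp [hP, coeff_X_pow, coeff_X]; omega
  have hP0 : P ≠ 0 := fun h0 => by simp [h0] at hc
  have hdeg : P.natDegree ≤ p := by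
    refine le_trans (natDegree_sub_le _ _) ?_
    simp [natDegree_X_pow]
    omega
  set S : Finset F := Finset.univ.image i with hS
  have hScard : S.card = p := by
    rw [hS, Finset.card_image_of_injective _ hi, Finset.card_univ, ZMod.card]
  have hsub : S ⊆ P.roots.toFinset := by
    intro b hb
    obtain ⟨c, _, rfl⟩ := Finset.mem_image.mp hb
    rw [Multiset.mem_toFinset, mem_roots hP0]
    simp only [hP, IsRoot.def, eval_sub, eval_pow, eval_X]
    rw [← map_pow, ZMod.pow_card, sub_self]
  have hcardle : P.roots.toFinset.card ≤ S.card := by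
    calc P.roots.toFinset.card ≤ Multiset.card P.roots := Multiset.toFinset_card_le _
    _ ≤ P.natDegree := card_roots' P
    _ ≤ p := hdeg
    _ = S.card := hScard.symm
  have hEq : S = P.roots.toFinset := Finset.eq_of_subset_of_card_le hsub hcardle
  have ha : a ∈ P.roots.toFinset := by
    rw [Multiset.mem_toFinset, mem_roots hP0]
    simp only [hP, IsRoot.def, eval_sub, eval_pow, eval_X]
    rw [h, sub_self]
  rw [← hEq] at ha
  obtain ⟨c, _, hc'⟩ := Finset.mem_image.mp ha
  exact ⟨c, hc'⟩

theorem markoff_elliptic_section (p : ℕ) [hp : Fact p.Prime] (hodd : p ≠ 2)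
    (F : Type) [Field F] [Algebra (ZMod p) F] (hcard : Nat.card F = p ^ 2)
    (v : F) (hv : v ^ (p + 1) = 1) (hv' : v ^ p ≠ v)
    (x : ZMod p) (hx : algebraMap (ZMod p) F x = v + v ^ p) (hxne : x ≠ 0)
    (κ : ZMod p) (hκ : κ = x ^ 2 / (x ^ 2 - 4)) :
    x ^ 2 ≠ 4 ∧
    Set.InjOn
      (fun t : F => (t + algebraMap (ZMod p) F κ / t,
        t * v + algebraMap (ZMod p) F κ / (t * v)))
      {t : F | t ^ (p + 1) = algebraMap (ZMod p) F κ} ∧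
    (fun t : F => (t + algebraMap (ZMod p) F κ / t,
        t * v + algebraMap (ZMod p) F κ / (t * v))) ''
        {t : F | t ^ (p + 1) = algebraMap (ZMod p) F κ} =
      (fun yz : ZMod p × ZMod p => (algebraMap (ZMod p) F yz.1, algebraMap (ZMod p) F yz.2)) ''
        {yz : ZMod p × ZMod p | x ^ 2 + yz.1 ^ 2 + yz.2 ^ 2 = x * yz.1 * yz.2} ∧
    {yz : ZMod p × ZMod p | x ^ 2 + yz.1 ^ 2 + yz.2 ^ 2 = x * yz.1 * yz.2}.ncard = p + 1 ∧
    Set.MapsTo (fun yz : ZMod p × ZMod p => (yz.2, x * yz.2 - yz.1))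
      {yz : ZMod p × ZMod p | x ^ 2 + yz.1 ^ 2 + yz.2 ^ 2 = x * yz.1 * yz.2}
      {yz : ZMod p × ZMod p | x ^ 2 + yz.1 ^ 2 + yz.2 ^ 2 = x * yz.1 * yz.2} ∧
    ∀ t : F, t ^ (p + 1) = algebraMap (ZMod p) F κ →
      ((t * v + algebraMap (ZMod p) F κ / (t * v)),
        algebraMap (ZMod p) F x * (t * v + algebraMap (ZMod p) F κ / (t * v)) -
          (t + algebraMap (ZMod p) F κ / t)) =
      (t * v + algebraMap (ZMod p) F κ / (t * v),
        (t * v) * v + algebraMap (ZMod p) F κ / ((t * v) * v)) := by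
  classical
  have hp2 : p.Prime := hp.out
  have hp3 : 3 ≤ p := by have := hp2.two_le; omega
  have podd : Odd p := hp2.odd_of_ne_two hodd
  set i := algebraMap (ZMod p) F with hidef
  have hi : Function.Injective i := i.injective
  haveI : CharP F p := charP_of_injective_algebraMap hi p
  haveI : Finite F := Nat.finite_of_card_ne_zero (by rw [hcard]; positivity)
  haveI : Fintype F := Fintype.ofFinite F
  have hFcard : Fintype.card F = p ^ 2 := by rw [← Nat.card_eq_fintype_card, hcard]
  have hfix' : ∀ c : ZMod p, (i c) ^ p = i c := fun c => by
    rw [← map_pow, ZMod.pow_card]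
  -- facts about v
  have hv0 : v ≠ 0 := by
    intro h; rw [h, zero_pow (by omega)] at hv; exact zero_ne_one hv
  have hvinv : v ^ p = v⁻¹ := by
    have h1 : v ^ p * v = 1 := by rw [← pow_succ]; exact hv
    exact eq_inv_of_mul_eq_one_left h1
  have hv1 : v⁻¹ ≠ v := by rw [← hvinv]; exact hv'
  have hvsq : v ^ 2 ≠ 1 := by
    intro h
    apply hv1
    have hvv : v * v = 1 := by rw [← pow_two]; exact h
    exact inv_eq_of_mul_eq_one_right hvv
  have hvv1 : v * v⁻¹ = 1 := mul_inv_cancel₀ hv0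
  have hxF : i x = v + v⁻¹ := by rw [hx, hvinv]
  have hvv0 : v - v⁻¹ ≠ 0 := by
    intro h
    apply hvsq
    have h2 := sub_eq_zero.mp h
    rw [sq]
    nth_rewrite 2 [h2]
    exact hvv1
  -- part 1
  have part1 : x ^ 2 ≠ 4 := by
    intro h
    have hvx : ∀ ε : F, ε ^ 2 = 1 → v + v⁻¹ = 2 * ε → False := by
      intro ε hε heq
      have hmul : v * (v + v⁻¹) = v * (2 * ε) := by rw [heq]
      have hexp : (v - ε) ^ 2 = 0 := by
        rw [mul_add, mul_inv_cancel₀ hv0] at hmul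
        linear_combination hmul + hε
      have hve : v = ε := by
        have := pow_eq_zero_iff (n := 2) (by omega) |>.mp hexp
        exact sub_eq_zero.mp this
      exact hvsq (by rw [hve]; exact hε)
    have h' : (x - 2) * (x + 2) = 0 := by linear_combination h
    rcases mul_eq_zero.mp h' with h2 | h2
    · have hx2 : x = 2 := by linear_combination h2
      refine hvx 1 (one_pow 2) ?_
      rw [← hxF, hx2, map_ofNat]
      norm_num
    · have hx2 : x = -2 := by linear_combination h2
      refine hvx (-1) (by ring) ?_
      rw [← hxF, hx2, map_neg, map_ofNat]
      ring
  have hx4 : x ^ 2 - 4 ≠ 0 := sub_ne_zero.mpr part1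
  have hκ0 : κ ≠ 0 := by rw [hκ]; exact div_ne_zero (pow_ne_zero 2 hxne) hx4
  have hK0 : i κ ≠ 0 := fun h => hκ0 (hi (by rw [h, map_zero]))
  have hκx : κ * (x ^ 2 - 4) = x ^ 2 := by rw [hκ]; field_simp
  have hKrel : i κ * (v - v⁻¹) ^ 2 = (v + v⁻¹) ^ 2 := by
    have h1 := congrArg i hκx
    have h4 : i (4 : ZMod p) = (4 : F) := map_ofNat i 4
    simp only [map_mul, map_sub, map_pow] at h1
    rw [h4, hxF] at h1
    have h5 : (v + v⁻¹) ^ 2 - 4 = (v - v⁻¹) ^ 2 := by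
      have : v * v⁻¹ = 1 := hvv1
      linear_combination (4 : F) * this
    rw [h5] at h1
    exact h1
  have hK : i κ = (v + v⁻¹) ^ 2 / (v - v⁻¹) ^ 2 := by
    rw [eq_div_iff (pow_ne_zero 2 hvv0)]; exact hKrel
  -- E basics
  have hE0 : ∀ t : F, t ^ (p + 1) = i κ → t ≠ 0 := by
    intro t ht h0
    rw [h0, zero_pow (by omega)] at ht
    exact hK0 ht.symm
  have hEp : ∀ t : F, t ^ (p + 1) = i κ → t ^ p * t = i κ := by
    intro t ht
    rw [← pow_succ]; exact ht
  have hEtv : ∀ t : F, t ^ (p + 1) = i κ → (t * v) ^ (p + 1) = i κ := by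
    intro t ht
    rw [mul_pow, ht, hv, mul_one]
  -- injectivity
  have inj : Set.InjOn
      (fun t : F => (t + i κ / t, t * v + i κ / (t * v)))
      {t : F | t ^ (p + 1) = i κ} := by
    rintro t ht s hs heq
    simp only [Set.mem_setOf_eq] at ht hs
    simp only [Prod.mk.injEq] at heq
    obtain ⟨h1, h2⟩ := heq
    have ht0 := hE0 t ht
    have hs0 := hE0 s hs
    by_contra hne
    have hstep : ∀ a b : F, a ≠ 0 → b ≠ 0 → a + i κ / a = b + i κ / b →
        (a - b) * (a * b - i κ) = 0 := by
      intro a b ha hb h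
      have h'' := congrArg (fun w : F => w * (a * b)) h
      have hL : (a + i κ / a) * (a * b) = a ^ 2 * b + i κ * b := by
        field_simp
      have hR : (b + i κ / b) * (a * b) = b ^ 2 * a + i κ * a := by
        field_simp
      linear_combination h'' - hL + hR
    have e1 : t * s = i κ := by
      rcases mul_eq_zero.mp (hstep t s ht0 hs0 h1) with h | h
      · exact absurd (sub_eq_zero.mp h) hne
      · exact sub_eq_zero.mp h
    have e2 : (t * v) * (s * v) = i κ := by
      rcases mul_eq_zero.mp
          (hstep (t * v) (s * v) (mul_ne_zero ht0 hv0) (mul_ne_zero hs0 hv0) h2) with h | h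
      · exact absurd (mul_right_cancel₀ hv0 (sub_eq_zero.mp h)) hne
      · exact sub_eq_zero.mp h
    apply hvsq
    have : i κ * v ^ 2 = i κ * 1 := by rw [mul_one]; linear_combination e2 - v ^ 2 * e1
    exact mul_left_cancel₀ hK0 this
  -- forward: image is contained in C(x)
  have hfixE : ∀ s : F, s ^ (p + 1) = i κ → ∃ c, i c = s + i κ / s := by
    intro s hs
    have hs0 := hE0 s hs
    have hsp' : s ^ p = i κ / s := by
      rw [eq_div_iff hs0]; exact hEp s hs
    apply aux_fix
    rw [add_pow_char, div_pow, hfix' κ, hsp']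
    have h9 : i κ / (i κ / s) = s := by
      rw [div_div_eq_mul_div, mul_comm, mul_div_assoc, div_self hK0, mul_one]
    rw [h9]
    exact add_comm _ _
  have fwd : ∀ t : F, t ^ (p + 1) = i κ →
      ∃ c d : ZMod p, i c = t + i κ / t ∧ i d = t * v + i κ / (t * v) ∧
        x ^ 2 + c ^ 2 + d ^ 2 = x * c * d := by
    intro t ht
    have ht0 := hE0 t ht
    have htv0 : t * v ≠ 0 := mul_ne_zero ht0 hv0
    obtain ⟨c, hc⟩ := hfixE t ht
    obtain ⟨d, hd⟩ := hfixE (t * v) (hEtv t ht)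
    refine ⟨c, d, hc, hd, ?_⟩
    apply hi
    simp only [map_add, map_mul, map_pow]
    rw [hc, hd, hxF]
    have hab : t * (i κ / t) = i κ := by
      rw [mul_comm, div_mul_cancel₀ _ ht0]
    have hzz : i κ / (t * v) = (i κ / t) * v⁻¹ := by
      rw [div_mul_eq_div_div, div_eq_mul_inv]
    rw [hzz]
    have hprod2 : (t * v + (i κ / t) * v⁻¹) * ((i κ / t) * v + t * v⁻¹)
        = (v + v⁻¹) ^ 2 + (t + i κ / t) ^ 2 := by
      linear_combination hKrel + (v - v⁻¹) ^ 2 * hab + (t + i κ / t) ^ 2 * hvv1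
    linear_combination (-1 : F) * hprod2
  -- backward
  have h2F : (2 : F) ≠ 0 := by
    have h2 : ((2 : ℕ) : F) ≠ 0 := by
      rw [Ne, CharP.cast_eq_zero_iff F p]
      intro hdvd
      have := Nat.le_of_dvd (by norm_num) hdvd
      omega
    simpa using h2
  have bwd : ∀ c d : ZMod p, x ^ 2 + c ^ 2 + d ^ 2 = x * c * d →
      ∃ t : F, t ^ (p + 1) = i κ ∧ t + i κ / t = i c ∧ t * v + i κ / (t * v) = i d := by
    intro c d hM
    have hMF : (v + v⁻¹) ^ 2 + (i c) ^ 2 + (i d) ^ 2 = (v + v⁻¹) * i c * i d := by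
      have h1 := congrArg i hM
      simp only [map_add, map_mul, map_pow] at h1
      rw [hxF] at h1
      exact h1
    -- square root of the discriminant
    obtain ⟨s, hs⟩ : ∃ s : F, s * s = (i c) ^ 2 - 4 * i κ := by
      have hcast : i (c ^ 2 - 4 * κ) = (i c) ^ 2 - 4 * i κ := by
        simp only [map_sub, map_mul, map_pow]
        rw [map_ofNat]
      by_cases hδ : c ^ 2 - 4 * κ = 0
      · refine ⟨0, ?_⟩
        rw [mul_zero, ← hcast, hδ, map_zero]
      · have hδF : i (c ^ 2 - 4 * κ) ≠ 0 := fun h => hδ (hi (by rw [h, map_zero]))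
        have hchar : ringChar F ≠ 2 := by
          rw [ringChar.eq F p]; exact hodd
        have hsq : IsSquare (i (c ^ 2 - 4 * κ)) := by
          rw [FiniteField.isSquare_iff hchar hδF, hFcard]
          obtain ⟨m, hm⟩ := podd
          have hexp : p ^ 2 / 2 = (2 * m) * (m + 1) := by
            have h1 : p ^ 2 = 2 * ((2 * m) * (m + 1)) + 1 := by rw [hm]; ring
            omega
          rw [hexp, pow_mul, ← map_pow]
          have hzp : (c ^ 2 - 4 * κ) ^ (2 * m) = 1 := by
            have h1 := ZMod.pow_card_sub_one_eq_one hδ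
            rw [show p - 1 = 2 * m by omega] at h1
            exact h1
          rw [hzp, map_one, one_pow]
        obtain ⟨r, hr⟩ := hsq
        exact ⟨r, by rw [← hr, hcast]⟩
    set t : F := (i c + s) / 2 with htdef
    have hroot : t * t - i c * t + i κ = 0 := by
      have hq : ((i c + s) / 2) * ((i c + s) / 2) - i c * ((i c + s) / 2) + i κ
          = (s * s - ((i c) ^ 2 - 4 * i κ)) / 4 := by
        have h4F : (4 : F) ≠ 0 := by
          rw [show (4 : F) = 2 * 2 by norm_num]
          exact mul_ne_zero h2F h2F
        field_simp
        ring
      rw [htdef, hq, hs, sub_self, zero_div]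
    have ht0 : t ≠ 0 := by
      intro h
      rw [h] at hroot
      simp at hroot
      exact hκ0 hroot
    set t' : F := i c - t with ht'def
    have htsum : t + t' = i c := by rw [ht'def]; ring
    have htt' : t * t' = i κ := by rw [ht'def]; linear_combination -hroot
    have ht'0 : t' ≠ 0 := fun h => hK0 (by rw [← htt', h, mul_zero])
    have hfrob : t ^ p = t ∨ t ^ p = t' := by
      have h1 : (t ^ p) * (t ^ p) - i c * (t ^ p) + i κ = 0 := by
        have hexp : (t * t - i c * t + i κ) ^ p
            = (t ^ p) * (t ^ p) - i c * (t ^ p) + i κ := by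
          rw [show t * t - i c * t + i κ = (t * t + i κ) - i c * t by ring]
          rw [sub_pow_char, add_pow_char, mul_pow, mul_pow, hfix' c, hfix' κ]
          ring
        rw [← hexp, hroot, zero_pow (by omega)]
      have h2 : (t ^ p - t) * (t ^ p - t') = 0 := by
        rw [ht'def]
        linear_combination h1 - hroot
      rcases mul_eq_zero.mp h2 with h | h
      · exact Or.inl (sub_eq_zero.mp h)
      · exact Or.inr (sub_eq_zero.mp h)
    -- the key construction
    have key : ∀ a b : F, a ≠ 0 → b ≠ 0 → a + b = i c → a * b = i κ →
        (a ^ p = a ∨ a ^ p = b) → i d = a * v + b * v⁻¹ →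
        ∃ t : F, t ^ (p + 1) = i κ ∧ t + i κ / t = i c ∧ t * v + i κ / (t * v) = i d := by
      intro a b ha0 hb0 hab hmul hfr hzd
      have hKa : i κ / a = b := by rw [← hmul, mul_comm, mul_div_assoc, div_self ha0, mul_one]
      have h1 : a + i κ / a = i c := by rw [hKa, hab]
      have h2 : a * v + i κ / (a * v) = i d := by
        rw [hzd, ← hmul]
        congr 1
        field_simp
      rcases hfr with hfr | hfr
      · -- Frobenius fixes a; force a = b
        have hbp : b ^ p = b := by
          rw [show b = i c - a by linear_combination hab, sub_pow_char, hfix' c, hfr]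
        have hba : a = b := by
          have h3 : i d = a * v⁻¹ + b * v := by
            have h4 := congrArg (fun w : F => w ^ p) hzd
            rw [hfix' d, add_pow_char, mul_pow, mul_pow, hfr, hbp, hvinv, inv_pow,
              hvinv, inv_inv] at h4
            exact h4
          have h5 : (a - b) * (v - v⁻¹) = 0 := by linear_combination h3 - hzd
          rcases mul_eq_zero.mp h5 with h | h
          · exact sub_eq_zero.mp h
          · exact absurd h hvv0
        have hpow : a ^ (p - 1) = 1 := by
          have h6 : a ^ (p - 1) * a = 1 * a := by
            rw [← pow_succ, show p - 1 + 1 = p by omega, hfr, one_mul]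
          exact mul_right_cancel₀ ha0 h6
        refine ⟨a, ?_, h1, h2⟩
        have h7 : a ^ (p + 1) = a ^ (p - 1) * (a * a) := by
          rw [← pow_two, ← pow_add]
          congr 1
          omega
        rw [h7, hpow, one_mul]
        nth_rewrite 2 [hba]
        exact hmul
      · refine ⟨a, ?_, h1, h2⟩
        rw [pow_succ, hfr, mul_comm]
        exact hmul
    -- match z with z1 or z2
    have hquad : (i d - (t * v + t' * v⁻¹)) * (i d - (t' * v + t * v⁻¹)) = 0 := by
      have hsum : (t * v + t' * v⁻¹) + (t' * v + t * v⁻¹) = (v + v⁻¹) * i c := by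
        linear_combination (v + v⁻¹) * htsum
      have hprod : (t * v + t' * v⁻¹) * (t' * v + t * v⁻¹) = (v + v⁻¹) ^ 2 + (i c) ^ 2 := by
        linear_combination hKrel + (v - v⁻¹) ^ 2 * htt' + (t + t') ^ 2 * hvv1
          + (t + t' + i c) * htsum
      linear_combination hMF - i d * hsum + hprod
    rcases mul_eq_zero.mp hquad with h | h
    · exact key t t' ht0 ht'0 htsum htt' hfrob (sub_eq_zero.mp h)
    · have hfrob' : t' ^ p = t' ∨ t' ^ p = t := by
        have ht'p : t' ^ p = i c - t ^ p := by
          rw [ht'def, sub_pow_char, hfix' c]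
        rcases hfrob with hh | hh
        · left; rw [ht'p, hh, ← ht'def]
        · right; rw [ht'p, hh, ht'def]; ring
      exact key t' t ht'0 ht0 (by rw [add_comm]; exact htsum)
        (by rw [mul_comm]; exact htt') hfrob' (sub_eq_zero.mp h)
  -- image equality
  have himg : (fun t : F => (t + i κ / t, t * v + i κ / (t * v))) ''
      {t : F | t ^ (p + 1) = i κ} =
      (fun yz : ZMod p × ZMod p => ((i yz.1 : F), (i yz.2 : F))) ''
      {yz : ZMod p × ZMod p | x ^ 2 + yz.1 ^ 2 + yz.2 ^ 2 = x * yz.1 * yz.2} := by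
    apply Set.Subset.antisymm
    · rintro ⟨y1, z1⟩ ⟨t, ht, heq⟩
      simp only [Set.mem_setOf_eq] at ht
      obtain ⟨c, d, hc, hd, hcd⟩ := fwd t ht
      refine ⟨(c, d), hcd, ?_⟩
      simp only [Prod.mk.injEq] at heq ⊢
      exact ⟨by rw [hc, heq.1], by rw [hd, heq.2]⟩
    · rintro ⟨y1, z1⟩ ⟨⟨c, d⟩, hcd, heq⟩
      obtain ⟨t, ht, h1, h2⟩ := bwd c d hcd
      refine ⟨t, ht, ?_⟩
      simp only [Prod.mk.injEq] at heq ⊢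
      exact ⟨by rw [h1, heq.1], by rw [h2, heq.2]⟩
  -- counting
  obtain ⟨g, hg⟩ := IsCyclic.exists_generator (α := Fˣ)
  have hgord : orderOf g = p ^ 2 - 1 := by
    rw [orderOf_eq_card_of_forall_mem_zpowers hg, Nat.card_units, hcard]
  have hpp : p ^ 2 = p * p := sq p
  have h9 : 3 * 3 ≤ p * p := Nat.mul_le_mul hp3 hp3
  have hfac : (p - 1) * (p + 1) = p ^ 2 - 1 := by
    obtain ⟨a, rfl⟩ : ∃ a, p = a + 1 := ⟨p - 1, by omega⟩
    have h1 : (a + 1) ^ 2 = a * (a + 1 + 1) + 1 := by ring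
    have h2 : a + 1 - 1 = a := by omega
    rw [h2, h1, Nat.add_sub_cancel]
  have hζord : orderOf (g ^ (p - 1)) = p + 1 := by
    rw [orderOf_pow, hgord]
    have hdvd : (p - 1) ∣ (p ^ 2 - 1) := ⟨p + 1, hfac.symm⟩
    rw [Nat.gcd_eq_right hdvd, ← hfac, Nat.mul_div_cancel_left _ (by omega : 0 < p - 1)]
  have hζF : IsPrimitiveRoot ((g ^ (p - 1) : Fˣ) : F) (p + 1) := by
    have h1 := IsPrimitiveRoot.orderOf ((g ^ (p - 1) : Fˣ) : F)
    rwa [orderOf_units, hζord] at h1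
  have hwex : ∃ w : F, w ^ (p + 1) = -1 := by
    obtain ⟨m, hm⟩ := podd
    subst hm
    have hm2 : 2 * (m * (2 * m + 1 + 1)) = (2 * m + 1) ^ 2 - 1 := by
      have h1 : (2 * m + 1) ^ 2 = 2 * (m * (2 * m + 1 + 1)) + 1 := by ring
      omega
    refine ⟨((g ^ m : Fˣ) : F), ?_⟩
    rw [← Units.val_pow_eq_pow_val, ← pow_mul]
    have he2 : ((g ^ (m * (2 * m + 1 + 1)) : Fˣ) : F) * ((g ^ (m * (2 * m + 1 + 1)) : Fˣ) : F)
        = 1 := by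
      rw [← Units.val_mul, ← pow_add]
      have hexp : m * (2 * m + 1 + 1) + m * (2 * m + 1 + 1) = (2 * m + 1) ^ 2 - 1 := by omega
      rw [hexp, ← hgord, pow_orderOf_eq_one, Units.val_one]
    have he1 : ((g ^ (m * (2 * m + 1 + 1)) : Fˣ) : F) ≠ 1 := by
      intro h
      have h' : (g : Fˣ) ^ (m * (2 * m + 1 + 1)) = 1 := Units.val_eq_one.mp h
      have hdvd := orderOf_dvd_of_pow_eq_one h'
      rw [hgord] at hdvd
      have hle := Nat.le_of_dvd (by omega) hdvd
      omega
    rcases mul_self_eq_one_iff.mp he2 with h | h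
    · exact absurd h he1
    · exact h
  have ht0ex : ∃ t₀ : F, t₀ ^ (p + 1) = i κ := by
    obtain ⟨w, hw⟩ := hwex
    set u : F := (v + v⁻¹) / (v - v⁻¹) with hudef
    have hd : (v - v⁻¹) ^ p = -(v - v⁻¹) := by
      rw [sub_pow_char, hvinv, inv_pow, hvinv, inv_inv]
      ring
    have hup : u ^ p = -u := by
      rw [hudef, div_pow, ← hxF, hfix' x, hxF, hd, div_neg]
    have hu2 : u ^ 2 = i κ := by
      rw [hudef, div_pow, hK]
    refine ⟨u * w, ?_⟩
    rw [mul_pow, hw, pow_succ, hup]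
    linear_combination hu2
  have hcardE : {t : F | t ^ (p + 1) = i κ}.ncard = p + 1 := by
    have hEeq : {t : F | t ^ (p + 1) = i κ}
        = ↑((Polynomial.nthRoots (p + 1) (i κ)).toFinset) := by
      ext a
      simp [Polynomial.mem_nthRoots (by omega : 0 < p + 1)]
    rw [hEeq, Set.ncard_coe_finset,
      Multiset.toFinset_card_of_nodup (hζF.nthRoots_nodup hK0),
      hζF.card_nthRoots, if_pos ht0ex]
  have hjinj : Function.Injective
      (fun yz : ZMod p × ZMod p => ((i yz.1 : F), (i yz.2 : F))) := by
    rintro ⟨a1, a2⟩ ⟨b1, b2⟩ h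
    simp only [Prod.mk.injEq] at h ⊢
    exact ⟨hi h.1, hi h.2⟩
  have hncard : {yz : ZMod p × ZMod p |
      x ^ 2 + yz.1 ^ 2 + yz.2 ^ 2 = x * yz.1 * yz.2}.ncard = p + 1 := by
    rw [← Set.ncard_image_of_injective _ hjinj, ← himg, Set.ncard_image_of_injOn inj, hcardE]
  refine ⟨part1, inj, himg, hncard, ?_, ?_⟩
  · rintro ⟨c, d⟩ h
    simp only [Set.mem_setOf_eq] at h ⊢
    linear_combination h
  · intro t ht
    have ht0 := hE0 t ht
    simp only [Prod.mk.injEq, true_and]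
    rw [hxF]
    field_simp
    ring
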